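/- Let D and Z be disjoint finite subsets of {1, …, n+1} with 2|D| + |Z| = 2k + r, and let ι be an r-admissible involution of Z. Define β = D ∪ { z ∈ Z : ι(z) ≥ z } and γ = D ∪ { z′ ∈ Z : ι(z′) < z′ } (so β contains all fixed points of ι and the smaller element of each nontrivial orbit, and γ contains the larger element of each nontrivial orbit). Then |β| = k + r and |γ| = k, the resulting symbol S = (β, γ) ∈ Sy(n,k,r) is standard, and the pairs of S are exactly the nontrivial orbits of ι, i.e. the pairs (z′, ι(z′)) with ι(z′) < z′. -/

import Mathlib

namespace LM2003

open scoped BigOperators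

/-- `(β, γ)` is a symbol in `Sy(n,k,r)`: two finite sets of integers contained in
`{1, …, n+1}`, of cardinalities `k+r` and `k` (rows are identified with the subsets
they enumerate; strict increase is automatic). -/
def IsSymbol (n k r : ℕ) (β γ : Finset ℤ) : Prop :=
  β ⊆ Finset.Icc 1 ((n : ℤ) + 1) ∧ γ ⊆ Finset.Icc 1 ((n : ℤ) + 1) ∧
    β.card = k + r ∧ γ.card = k

/-- `(β,γ)` is standard: for each `i < |γ|`, the `i`-th smallest element of `β`
is `≤` the `i`-th smallest element of `γ`. -/
def IsStandard (β γ : Finset ℤ) : Prop :=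
  ∀ i : ℕ, i < γ.card → (β.sort (· ≤ ·))[i]! ≤ (γ.sort (· ≤ ·))[i]!

/-- Accumulated data after level `l` of the recursive definition of `ψ`:
the first component is `γ⁰ ∪ ⋯ ∪ γ^l` and the second is `ψ(γ⁰ ∪ ⋯ ∪ γ^l)`. -/
def psiAcc (β γ : Finset ℤ) : ℕ → Finset ℤ × Finset ℤ
  | 0 => (γ ∩ β, γ ∩ β)
  | l + 1 =>
    let p := psiAcc β γ l
    let g := (γ \ p.1).filter fun j => j - ((l : ℤ) + 1) ∈ β \ p.2
    (p.1 ∪ g, p.2 ∪ g.image fun j => j - ((l : ℤ) + 1))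

/-- The level sets `γ^l` in the recursive definition of `ψ`. -/
def gammaL (β γ : Finset ℤ) : ℕ → Finset ℤ
  | 0 => γ ∩ β
  | l + 1 =>
    (γ \ (psiAcc β γ l).1).filter fun j => j - ((l : ℤ) + 1) ∈ β \ (psiAcc β γ l).2

open Classical in
/-- The map `ψ` : for `j ∈ γ^l` it is `j ↦ j - l` (via the least such `l`),
and the identity elsewhere. -/
noncomputable def psiS (β γ : Finset ℤ) (j : ℤ) : ℤ :=
  if h : ∃ l, j ∈ gammaL β γ l then j - (Nat.find h : ℤ) else j

/-- The pairs of a (standard) symbol: the pairs `(j, ψ(j))` with `j ∈ γ` and `ψ(j) ≠ j`. -/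
noncomputable def pairsS (β γ : Finset ℤ) : Finset (ℤ × ℤ) :=
  (γ.filter fun j => psiS β γ j ≠ j).image fun j => (j, psiS β γ j)

/-- Exchanging, for every pair in `T`, the two members between the two rows of `(β,γ)`
(reordering of rows is automatic for sets). Pairs are written `(j, ψ j)` with `j` in the
bottom row `γ` and `ψ j` in the top row `β`. -/
def swapSymbol (β γ : Finset ℤ) (T : Finset (ℤ × ℤ)) : Finset ℤ × Finset ℤ :=
  ((β \ T.image Prod.snd) ∪ T.image Prod.fst,
   (γ \ T.image Prod.fst) ∪ T.image Prod.snd)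

/-- The class `C(S)` of a standard symbol: all symbols obtained by permuting a subset
of its pairs. -/
noncomputable def CSet (β γ : Finset ℤ) : Finset (Finset ℤ × Finset ℤ) :=
  (pairsS β γ).powerset.image (swapSymbol β γ)

/-- The Fock space `F(Λ)`: free `ℚ(v)`-module on the set of all symbols. -/
abbrev FF : Type := (Finset ℤ × Finset ℤ) →₀ RatFunc ℚ

/-- Standard basis vector `u_S`. -/
noncomputable def uS (S : Finset ℤ × Finset ℤ) : FF := Finsupp.single S 1

/-- The variable `v` of `K = ℚ(v)`. -/
noncomputable def vv : RatFunc ℚ := RatFunc.X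

/-- Action of the Chevalley generator `f_j` on the standard basis vector `u_S`. -/
noncomputable def fAct (j : ℤ) (S : Finset ℤ × Finset ℤ) : FF :=
  (if j ∈ S.2 ∧ j + 1 ∉ S.2 then uS (S.1, insert (j + 1) (S.2.erase j)) else 0) +
  (if j ∈ S.1 ∧ j + 1 ∉ S.1 then
      vv ^ ((if j ∈ S.2 then (1 : ℤ) else 0) - (if j + 1 ∈ S.2 then (1 : ℤ) else 0)) •
        uS (insert (j + 1) (S.1.erase j), S.2)
    else 0)

/-- The Chevalley generator `f_j` as a linear operator on `F`. -/
noncomputable def fLin (j : ℤ) : FF →ₗ[RatFunc ℚ] FF :=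
  Finsupp.lsum (RatFunc ℚ) fun S => LinearMap.toSpanSingleton (RatFunc ℚ) FF (fAct j S)

/-- Divided powers: `f_j^{(1)} = f_j`, `f_j^{(2)} = f_j² / (v + v⁻¹)`. -/
noncomputable def fDiv (j : ℤ) (m : ℕ) : FF →ₗ[RatFunc ℚ] FF :=
  if m = 2 then (vv + vv⁻¹)⁻¹ • (fLin j ∘ₗ fLin j) else fLin j

/-- `b_S = Σ_{Σ ∈ C(S)} v^{n(Σ)} u_Σ`, written as a sum over the subsets `T` of the
set of pairs of `S` (with `n(Σ) = |T|`). -/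
noncomputable def bS (β γ : Finset ℤ) : FF :=
  ∑ T ∈ (pairsS β γ).powerset, vv ^ T.card • uS (swapSymbol β γ T)

/-- `ι` is an involution of the finite set `Z`. -/
def IsInvolutionOn (Z : Finset ℤ) (ι : ℤ → ℤ) : Prop :=
  (∀ z ∈ Z, ι z ∈ Z) ∧ ∀ z ∈ Z, ι (ι z) = z

/-- `z < z'` are consecutive elements of `Z`. -/
def ConsecutiveIn (Z : Finset ℤ) (z z' : ℤ) : Prop :=
  z ∈ Z ∧ z' ∈ Z ∧ z < z' ∧ ∀ x ∈ Z, ¬(z < x ∧ x < z')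

/-- `r`-admissible involutions of a finite set `Z` of integers: `ι` is an involution of
`Z` with exactly `r` fixed points, and either `|Z| = r`, or there are two consecutive
elements `z < z'` of `Z` with `ι z = z'` whose removal again yields an `r`-admissible
involution. -/
inductive IsAdmissible (r : ℕ) : Finset ℤ → (ℤ → ℤ) → Prop
  | base (Z : Finset ℤ) (ι : ℤ → ℤ) (hinv : IsInvolutionOn Z ι)
      (hfix : (Z.filter fun z => ι z = z).card = r) (hcard : Z.card = r) :
      IsAdmissible r Z ι
  | step (Z : Finset ℤ) (ι : ℤ → ℤ) (z z' : ℤ) (hinv : IsInvolutionOn Z ι)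
      (hfix : (Z.filter fun w => ι w = w).card = r)
      (hcons : ConsecutiveIn Z z z') (hzz : ι z = z')
      (hrec : IsAdmissible r (Z \ {z, z'}) ι) :
      IsAdmissible r Z ι

/-- `c_j(S)`: number of occurrences of `j` among the entries of the symbol `(β,γ)`. -/
def contentS (β γ : Finset ℤ) (j : ℤ) : ℕ :=
  (if j ∈ β then 1 else 0) + (if j ∈ γ then 1 else 0)


section AuxSort

lemma sortL2 {s : Finset ℤ} {i : ℕ} {t : ℤ}
    (h : i + 1 ≤ (s.filter (· ≤ t)).card) : (s.sort (· ≤ ·))[i]! ≤ t := by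
  set L := s.sort (· ≤ ·) with hL
  have hlen : L.length = s.card := Finset.length_sort _
  have hi : i < L.length := by
    have := Finset.card_filter_le s (· ≤ t); omega
  rw [getElem!_pos L i hi]
  by_contra hcon
  push_neg at hcon
  have hcard : (s.filter (· ≤ t)).card ≤ (Finset.range i).card := by
    apply Finset.card_le_card_of_injOn (fun x => L.idxOf x)
    · intro x hx
      simp only [Finset.mem_coe, Finset.mem_filter] at hx
      have hxL : x ∈ L := (Finset.mem_sort _).2 hx.1
      have hidx : L.idxOf x < L.length := List.idxOf_lt_length_iff.2 hxL
      simp only [Finset.mem_coe, Finset.mem_range]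
      by_contra hge
      push_neg at hge
      rcases eq_or_lt_of_le hge with heq | hlt
      · have h1 : L[L.idxOf x]'hidx = x := List.getElem_idxOf hidx
        have h2 : L[i] = L[L.idxOf x]'hidx := by congr 1
        omega
      · have hrel : L.get ⟨i, hi⟩ ≤ L.get ⟨L.idxOf x, hidx⟩ :=
          (Finset.pairwise_sort s (· ≤ ·)).rel_get_of_lt hlt
        simp only [List.get_eq_getElem, List.getElem_idxOf] at hrel
        omega
    · intro x hx y hy hxy
      have hxL : x ∈ L := (Finset.mem_sort _).2 (Finset.mem_filter.1 (by exact_mod_cast hx)).1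
      have hyL : y ∈ L := (Finset.mem_sort _).2 (Finset.mem_filter.1 (by exact_mod_cast hy)).1
      have hix : List.idxOf x L < L.length := List.idxOf_lt_length_iff.2 hxL
      have hiy : List.idxOf y L < L.length := List.idxOf_lt_length_iff.2 hyL
      have h1 : L[List.idxOf x L]'hix = x := List.getElem_idxOf hix
      have h2 : L[List.idxOf y L]'hiy = y := List.getElem_idxOf hiy
      simp only at hxy
      rw [← h1, ← h2]
      congr 1
  simp only [Finset.card_range] at hcard
  omega

lemma sortL1 {s : Finset ℤ} {i : ℕ} (h : i < s.card) :
    i + 1 ≤ (s.filter (· ≤ (s.sort (· ≤ ·))[i]!)).card := by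
  set L := s.sort (· ≤ ·) with hL
  have hlen : L.length = s.card := Finset.length_sort _
  have hi : i < L.length := by omega
  have : (Finset.range (i+1)).card ≤ (s.filter (· ≤ L[i]!)).card := by
    apply Finset.card_le_card_of_injOn (fun j => L[j]!)
    · intro j hj
      simp only [Finset.mem_coe, Finset.mem_range] at hj
      have hjL : j < L.length := by omega
      simp only [Finset.mem_coe, getElem!_pos L j hjL, getElem!_pos L i hi]
      simp only [Finset.mem_filter]
      refine ⟨(Finset.mem_sort _).1 (List.getElem_mem hjL), ?_⟩
      rcases eq_or_lt_of_le (Nat.lt_succ_iff.1 hj) with heq | hlt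
      · subst heq; exact le_refl _
      · exact ((Finset.pairwise_sort s (· ≤ ·)).rel_get_of_lt
          (show (⟨j,hjL⟩ : Fin L.length) < ⟨i,hi⟩ from hlt))
    · intro a ha b hb hab
      simp only [Finset.coe_range, Set.mem_Iio] at ha hb
      have haL : a < L.length := by omega
      have hbL : b < L.length := by omega
      simp only [getElem!_pos L a haL, getElem!_pos L b hbL] at hab
      exact ((Finset.sort_nodup s (· ≤ ·)).getElem_inj_iff).1 hab
  simpa using this

end AuxSort

section AuxAdm

lemma adm_inv {r : ℕ} {Z : Finset ℤ} {ι : ℤ → ℤ} (h : IsAdmissible r Z ι) :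
    IsInvolutionOn Z ι := by cases h <;> assumption

lemma adm_fix {r : ℕ} {Z : Finset ℤ} {ι : ℤ → ℤ} (h : IsAdmissible r Z ι) :
    (Z.filter fun z => ι z = z).card = r := by cases h <;> assumption

lemma adm_nested {r : ℕ} {Z : Finset ℤ} {ι : ℤ → ℤ} (h : IsAdmissible r Z ι) :
    ∀ z ∈ Z, ι z < z → ∀ y ∈ Z, ι z < y → y < z → ι y ≠ y ∧ ι z < ι y ∧ ι y < z := by
  induction h with
  | base Z ι hinv hfix hcard =>
    intro z hz hlt
    exfalso
    have hfe : Z.filter (fun w => ι w = w) = Z :=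
      Finset.eq_of_subset_of_card_le (Finset.filter_subset _ _) (by omega)
    have := Finset.filter_eq_self.1 hfe z hz
    omega
  | step Z ι a a' hinv hfix hcons hzz hrec ih =>
    intro z hz hlt y hy h1 h2
    obtain ⟨ha, ha', haa', hbet⟩ := hcons
    have hιa' : ι a' = a := by rw [← hzz, hinv.2 a ha]
    have hza : z ≠ a := by rintro rfl; omega
    by_cases hza' : z = a'
    · subst hza'
      rw [hιa'] at h1
      exact absurd ⟨h1, h2⟩ (hbet y hy)
    have hzZ' : z ∈ Z \ {a, a'} := by simp [hz, hza, hza']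
    have hιz : ι z ∈ Z := hinv.1 z hz
    have hιza : ι z ≠ a := fun h => hza' (by rw [← hinv.2 z hz, h, hzz])
    have hιza' : ι z ≠ a' := fun h => hza (by rw [← hinv.2 z hz, h, hιa'])
    by_cases hya : y = a
    · subst hya
      have hz1 : a' < z := by
        have := hbet z hz
        rcases lt_trichotomy z a' with h | h | h
        · exact absurd ⟨h2, h⟩ this
        · exact absurd h hza'
        · exact h
      refine ⟨by rw [hzz]; omega, by rw [hzz]; omega, by rw [hzz]; omega⟩
    by_cases hya' : y = a'
    · subst hya'
      have hz2 : ι z < a := by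
        have := hbet (ι z) hιz
        rcases lt_trichotomy (ι z) a with h | h | h
        · exact h
        · exact absurd h hιza
        · exact absurd ⟨h, h1⟩ this
      refine ⟨by rw [hιa']; omega, by rw [hιa']; omega, by rw [hιa']; omega⟩
    have hyZ' : y ∈ Z \ {a, a'} := by simp [hy, hya, hya']
    exact ih z hzZ' hlt y hyZ' h1 h2

end AuxAdm

section AuxPsi
variable {D Z : Finset ℤ} {ι : ℤ → ℤ}

lemma interDB (hdisj : Disjoint D Z) :
    (D ∪ Z.filter fun z => ι z < z) ∩ (D ∪ Z.filter fun z => z ≤ ι z) = D := by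
  ext x
  simp only [Finset.mem_inter, Finset.mem_union, Finset.mem_filter]
  constructor
  · rintro ⟨h1 | h1, h2 | h2⟩
    · exact h1
    · exact h1
    · exact absurd h2 (Finset.disjoint_right.1 hdisj h1.1)
    · omega
  · intro h; exact ⟨Or.inl h, Or.inl h⟩

lemma g_eq (hinv : IsInvolutionOn Z ι) (hdisj : Disjoint D Z)
    (hnest : ∀ z ∈ Z, ι z < z → ∀ y ∈ Z, ι z < y → y < z → ι y ≠ y ∧ ι z < ι y ∧ ι y < z)
    (l : ℕ) :
    (((D ∪ Z.filter fun z => ι z < z) \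
        (D ∪ (Z.filter fun z => ι z < z).filter fun z => z - ι z ≤ (l : ℤ))).filter
      fun j => j - ((l : ℤ) + 1) ∈ (D ∪ Z.filter fun z => z ≤ ι z) \
        (D ∪ ((Z.filter fun z => ι z < z).filter fun z => z - ι z ≤ (l : ℤ)).image ι)) =
    (Z.filter fun z => ι z < z).filter fun z => z - ι z = (l : ℤ) + 1 := by
  have hDZ : ∀ x ∈ D, x ∉ Z := fun x hx => Finset.disjoint_left.1 hdisj hx
  ext j
  simp only [Finset.mem_filter, Finset.mem_sdiff, Finset.mem_union, Finset.mem_image,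
    not_or, not_and, not_exists]
  constructor
  · rintro ⟨⟨hjγ, hjD, hjPl⟩, hyβ, hyD, hyim⟩
    have hjP : j ∈ Z ∧ ι j < j := hjγ.resolve_left hjD
    refine ⟨hjP, ?_⟩
    by_contra hne
    have hgap : (l : ℤ) + 1 < j - ι j := by
      have := hjPl hjP; omega
    have hyZ : j - ((l:ℤ)+1) ∈ Z ∧ j - ((l:ℤ)+1) ≤ ι (j - ((l:ℤ)+1)) := hyβ.resolve_left hyD
    obtain ⟨hne', hlo, hhi⟩ := hnest j hjP.1 hjP.2 _ hyZ.1 (by omega) (by omega)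
    have hiy := hinv.2 _ hyZ.1
    exact hyim (ι (j - ((l:ℤ)+1))) ⟨⟨hinv.1 _ hyZ.1, by omega⟩, by omega⟩ hiy
  · rintro ⟨⟨hjZ, hjlt⟩, hgap⟩
    have hιZ : ι j ∈ Z := hinv.1 j hjZ
    have hιι : ι (ι j) = j := hinv.2 j hjZ
    rw [show j - ((l:ℤ)+1) = ι j from by omega]
    refine ⟨⟨Or.inr ⟨hjZ, hjlt⟩, fun h => hDZ j h hjZ, fun _ => by omega⟩,
      Or.inr ⟨hιZ, by omega⟩, fun h => hDZ _ h hιZ, ?_⟩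
    rintro x ⟨⟨hxZ, hxlt⟩, hxle⟩ hcontra
    have hxj : x = j := by rw [← hinv.2 x hxZ, hcontra, hιι]
    omega

lemma psiAcc_eq (hinv : IsInvolutionOn Z ι) (hdisj : Disjoint D Z)
    (hnest : ∀ z ∈ Z, ι z < z → ∀ y ∈ Z, ι z < y → y < z → ι y ≠ y ∧ ι z < ι y ∧ ι y < z)
    (l : ℕ) :
    psiAcc (D ∪ Z.filter fun z => z ≤ ι z) (D ∪ Z.filter fun z => ι z < z) l =
      (D ∪ ((Z.filter fun z => ι z < z).filter fun z => z - ι z ≤ (l : ℤ)),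
       D ∪ (((Z.filter fun z => ι z < z).filter fun z => z - ι z ≤ (l : ℤ)).image ι)) := by
  induction l with
  | zero =>
    have h0 : ((Z.filter fun z => ι z < z).filter fun z => z - ι z ≤ ((0:ℕ) : ℤ)) = ∅ := by
      apply Finset.filter_false_of_mem
      intro x hx
      have := (Finset.mem_filter.1 hx).2
      omega
    simp only [psiAcc, h0, Finset.image_empty, Finset.union_empty]
    rw [interDB hdisj]
  | succ l ih =>
    simp only [psiAcc]
    rw [ih]
    simp only
    rw [g_eq hinv hdisj hnest l]
    have himg : (((Z.filter fun z => ι z < z).filter fun z => z - ι z = (l : ℤ) + 1).image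
        fun j => j - ((l : ℤ) + 1)) =
        (((Z.filter fun z => ι z < z).filter fun z => z - ι z = (l : ℤ) + 1).image ι) := by
      apply Finset.image_congr
      intro x hx
      have := (Finset.mem_filter.1 hx).2
      simp only
      omega
    rw [himg]
    have hfu : ((Z.filter fun z => ι z < z).filter fun z => z - ι z ≤ (l : ℤ)) ∪
        ((Z.filter fun z => ι z < z).filter fun z => z - ι z = (l : ℤ) + 1) =
        (Z.filter fun z => ι z < z).filter fun z => z - ι z ≤ ((l + 1 : ℕ) : ℤ) := by
      rw [← Finset.filter_or]
      apply Finset.filter_congr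
      intro x _
      push_cast
      constructor
      · intro h; omega
      · intro h; omega
    rw [Prod.mk.injEq]
    constructor
    · rw [Finset.union_assoc, hfu]
    · rw [Finset.union_assoc, ← Finset.image_union, hfu]

lemma gammaL_zero (hdisj : Disjoint D Z) :
    gammaL (D ∪ Z.filter fun z => z ≤ ι z) (D ∪ Z.filter fun z => ι z < z) 0 = D := by
  simp only [gammaL]
  exact interDB hdisj

lemma gammaL_succ (hinv : IsInvolutionOn Z ι) (hdisj : Disjoint D Z)
    (hnest : ∀ z ∈ Z, ι z < z → ∀ y ∈ Z, ι z < y → y < z → ι y ≠ y ∧ ι z < ι y ∧ ι y < z)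
    (l : ℕ) :
    gammaL (D ∪ Z.filter fun z => z ≤ ι z) (D ∪ Z.filter fun z => ι z < z) (l + 1) =
      (Z.filter fun z => ι z < z).filter fun z => z - ι z = (l : ℤ) + 1 := by
  simp only [gammaL]
  rw [psiAcc_eq hinv hdisj hnest l]
  exact g_eq hinv hdisj hnest l

lemma psiS_D (hdisj : Disjoint D Z) {x : ℤ} (hx : x ∈ D) :
    psiS (D ∪ Z.filter fun z => z ≤ ι z) (D ∪ Z.filter fun z => ι z < z) x = x := by
  have h0 : x ∈ gammaL (D ∪ Z.filter fun z => z ≤ ι z) (D ∪ Z.filter fun z => ι z < z) 0 := by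
    rw [gammaL_zero hdisj]; exact hx
  rw [psiS, dif_pos ⟨0, h0⟩]
  have hf : Nat.find (⟨0, h0⟩ : ∃ l, x ∈ gammaL (D ∪ Z.filter fun z => z ≤ ι z)
      (D ∪ Z.filter fun z => ι z < z) l) = 0 := (Nat.find_eq_zero _).2 h0
  rw [hf]
  simp

lemma psiS_P (hinv : IsInvolutionOn Z ι) (hdisj : Disjoint D Z)
    (hnest : ∀ z ∈ Z, ι z < z → ∀ y ∈ Z, ι z < y → y < z → ι y ≠ y ∧ ι z < ι y ∧ ι y < z)
    {x : ℤ} (hx : x ∈ Z) (hlt : ι x < x) :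
    psiS (D ∪ Z.filter fun z => z ≤ ι z) (D ∪ Z.filter fun z => ι z < z) x = ι x := by
  obtain ⟨m', hmz⟩ : ∃ m' : ℕ, ((m' : ℤ) + 1) = x - ι x := by
    refine ⟨(x - ι x).toNat - 1, ?_⟩
    have h1 : ((x - ι x).toNat : ℤ) = x - ι x := Int.toNat_of_nonneg (by omega)
    have h2 : 1 ≤ (x - ι x).toNat := by omega
    push_cast [h2]
    omega
  have hmem : x ∈ gammaL (D ∪ Z.filter fun z => z ≤ ι z) (D ∪ Z.filter fun z => ι z < z)
      (m' + 1) := by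
    rw [gammaL_succ hinv hdisj hnest]
    exact Finset.mem_filter.2 ⟨Finset.mem_filter.2 ⟨hx, hlt⟩, hmz.symm⟩
  have hex : ∃ l, x ∈ gammaL (D ∪ Z.filter fun z => z ≤ ι z)
      (D ∪ Z.filter fun z => ι z < z) l := ⟨m' + 1, hmem⟩
  rw [psiS, dif_pos hex]
  have huniq : ∀ l, x ∈ gammaL (D ∪ Z.filter fun z => z ≤ ι z)
      (D ∪ Z.filter fun z => ι z < z) l → l = m' + 1 := by
    intro l hl
    cases l with
    | zero =>
      rw [gammaL_zero hdisj] at hl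
      exact absurd hx (Finset.disjoint_left.1 hdisj hl)
    | succ l' =>
      rw [gammaL_succ hinv hdisj hnest] at hl
      have := (Finset.mem_filter.1 hl).2
      omega
  have hfind : Nat.find hex = m' + 1 := huniq _ (Nat.find_spec hex)
  rw [hfind]
  push_cast
  omega

lemma pairs_eq (hinv : IsInvolutionOn Z ι) (hdisj : Disjoint D Z)
    (hnest : ∀ z ∈ Z, ι z < z → ∀ y ∈ Z, ι z < y → y < z → ι y ≠ y ∧ ι z < ι y ∧ ι y < z) :
    pairsS (D ∪ Z.filter fun z => z ≤ ι z) (D ∪ Z.filter fun z => ι z < z) =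
      (Z.filter fun z => ι z < z).image fun z => (z, ι z) := by
  rw [pairsS]
  have hfil : ((D ∪ Z.filter fun z => ι z < z).filter fun j =>
      psiS (D ∪ Z.filter fun z => z ≤ ι z) (D ∪ Z.filter fun z => ι z < z) j ≠ j) =
      Z.filter fun z => ι z < z := by
    ext j
    simp only [Finset.mem_filter, Finset.mem_union]
    constructor
    · rintro ⟨hD | hP, hne⟩
      · exact absurd (psiS_D hdisj hD) hne
      · exact hP
    · rintro ⟨hjZ, hjlt⟩
      refine ⟨Or.inr ⟨hjZ, hjlt⟩, ?_⟩
      rw [psiS_P hinv hdisj hnest hjZ hjlt]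
      omega
  rw [hfil]
  apply Finset.image_congr
  rintro x hx
  obtain ⟨hxZ, hxlt⟩ := Finset.mem_filter.1 hx
  simp only
  rw [psiS_P hinv hdisj hnest hxZ hxlt]

end AuxPsi

/-- Lemma 4.1 (b): given disjoint `D, Z ⊆ {1,…,n+1}` with
`2|D| + |Z| = 2k + r` and an `r`-admissible involution `ι` of `Z`, the symbol with
`β = D ∪ {z : ι z ≥ z}` and `γ = D ∪ {z' : ι z' < z'}` has rows of cardinalities
`k+r` and `k`, lies in `Sy(n,k,r)`, is standard, and its pairs are exactly the
nontrivial orbits `(z', ι z')` (with `ι z' < z'`) of `ι`. -/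
theorem statement8 (n k r : ℕ) (hn : 2 ≤ n) (hk : 1 ≤ k) (hkr : k + r ≤ n)
    (D Z : Finset ℤ) (ι : ℤ → ℤ)
    (hD : D ⊆ Finset.Icc 1 ((n : ℤ) + 1)) (hZ : Z ⊆ Finset.Icc 1 ((n : ℤ) + 1))
    (hdisj : Disjoint D Z) (hcard : 2 * D.card + Z.card = 2 * k + r)
    (hadm : IsAdmissible r Z ι) :
    (D ∪ Z.filter fun z => z ≤ ι z).card = k + r ∧
    (D ∪ Z.filter fun z => ι z < z).card = k ∧
    IsSymbol n k r (D ∪ Z.filter fun z => z ≤ ι z) (D ∪ Z.filter fun z => ι z < z) ∧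
    IsStandard (D ∪ Z.filter fun z => z ≤ ι z) (D ∪ Z.filter fun z => ι z < z) ∧
    pairsS (D ∪ Z.filter fun z => z ≤ ι z) (D ∪ Z.filter fun z => ι z < z) =
      (Z.filter fun z => ι z < z).image fun z => (z, ι z) := by
  have hinv : IsInvolutionOn Z ι := adm_inv hadm
  have hfix := adm_fix hadm
  have hnest := adm_nested hadm
  have hDZ : ∀ x ∈ D, x ∉ Z := fun x hx => Finset.disjoint_left.1 hdisj hx
  -- cardinalities
  have hPQ : (Z.filter fun z => ι z < z).card = (Z.filter fun z => z < ι z).card := by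
    apply Finset.card_bij' (fun z _ => ι z) (fun z _ => ι z)
    · intro a ha
      obtain ⟨haZ, halt⟩ := Finset.mem_filter.1 ha
      exact Finset.mem_filter.2 ⟨hinv.1 a haZ, by rw [hinv.2 a haZ]; exact halt⟩
    · intro a ha
      obtain ⟨haZ, halt⟩ := Finset.mem_filter.1 ha
      exact Finset.mem_filter.2 ⟨hinv.1 a haZ, by rw [hinv.2 a haZ]; exact halt⟩
    · intro a ha; exact hinv.2 a (Finset.mem_filter.1 ha).1
    · intro a ha; exact hinv.2 a (Finset.mem_filter.1 ha).1
  have hsplit : (Z.filter fun z => ι z < z).card + (Z.filter fun z => z ≤ ι z).card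
      = Z.card := by
    have h := Finset.card_filter_add_card_filter_not (s := Z) (fun z => ι z < z)
    have he : (Z.filter fun z => ¬ ι z < z) = Z.filter fun z => z ≤ ι z :=
      Finset.filter_congr fun x _ => not_lt
    rw [he] at h
    exact h
  have hZle : (Z.filter fun z => z ≤ ι z).card = r + (Z.filter fun z => z < ι z).card := by
    have he : Z.filter (fun z => z ≤ ι z) =
        Z.filter (fun z => ι z = z) ∪ Z.filter (fun z => z < ι z) := by
      rw [← Finset.filter_or]
      exact Finset.filter_congr fun x _ => ⟨fun h => by omega, fun h => by omega⟩
    rw [he, Finset.card_union_of_disjoint, hfix]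
    rw [Finset.disjoint_left]
    intro a h1 h2
    have := (Finset.mem_filter.1 h1).2
    have := (Finset.mem_filter.1 h2).2
    omega
  have hbd : Disjoint D (Z.filter fun z => z ≤ ι z) :=
    Finset.disjoint_of_subset_right (Finset.filter_subset _ _) hdisj
  have hgd : Disjoint D (Z.filter fun z => ι z < z) :=
    Finset.disjoint_of_subset_right (Finset.filter_subset _ _) hdisj
  have hbcard : (D ∪ Z.filter fun z => z ≤ ι z).card
      = D.card + (Z.filter fun z => z ≤ ι z).card := Finset.card_union_of_disjoint hbd
  have hgcard : (D ∪ Z.filter fun z => ι z < z).card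
      = D.card + (Z.filter fun z => ι z < z).card := Finset.card_union_of_disjoint hgd
  have hb : (D ∪ Z.filter fun z => z ≤ ι z).card = k + r := by omega
  have hg : (D ∪ Z.filter fun z => ι z < z).card = k := by omega
  have hsubβ : (D ∪ Z.filter fun z => z ≤ ι z) ⊆ Finset.Icc 1 ((n : ℤ) + 1) :=
    Finset.union_subset hD (Finset.Subset.trans (Finset.filter_subset _ _) hZ)
  have hsubγ : (D ∪ Z.filter fun z => ι z < z) ⊆ Finset.Icc 1 ((n : ℤ) + 1) :=
    Finset.union_subset hD (Finset.Subset.trans (Finset.filter_subset _ _) hZ)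
  refine ⟨hb, hg, ⟨hsubβ, hsubγ, hb, hg⟩, ?_, pairs_eq hinv hdisj hnest⟩
  -- standardness
  intro i hi
  apply sortL2
  refine le_trans (sortL1 hi) ?_
  apply Finset.card_le_card_of_injOn (fun x => if x ∈ Z then ι x else x)
  · intro x hx
    obtain ⟨hxγ, hxt⟩ := Finset.mem_filter.1 hx
    by_cases hxZ : x ∈ Z
    · have hxP : ι x < x := by
        rcases Finset.mem_union.1 hxγ with h | h
        · exact absurd hxZ (hDZ x h)
        · exact (Finset.mem_filter.1 h).2
      simp only [Finset.mem_coe, if_pos hxZ]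
      refine Finset.mem_filter.2 ⟨Finset.mem_union.2 (Or.inr (Finset.mem_filter.2
        ⟨hinv.1 x hxZ, ?_⟩)), by omega⟩
      rw [hinv.2 x hxZ]
      omega
    · have hxD : x ∈ D := by
        rcases Finset.mem_union.1 hxγ with h | h
        · exact h
        · exact absurd (Finset.mem_filter.1 h).1 hxZ
      simp only [Finset.mem_coe, if_neg hxZ]
      exact Finset.mem_filter.2 ⟨Finset.mem_union.2 (Or.inl hxD), hxt⟩
  · intro x hx y hy hxy
    have hx' := Finset.mem_filter.1 (Finset.mem_coe.1 hx)
    have hy' := Finset.mem_filter.1 (Finset.mem_coe.1 hy)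
    have hmemD : ∀ w : ℤ, w ∈ (D ∪ Z.filter fun z => ι z < z) → w ∉ Z → w ∈ D := by
      intro w hw hwZ
      rcases Finset.mem_union.1 hw with h | h
      · exact h
      · exact absurd (Finset.mem_filter.1 h).1 hwZ
    simp only at hxy
    by_cases hxZ : x ∈ Z <;> by_cases hyZ : y ∈ Z
    · rw [if_pos hxZ, if_pos hyZ] at hxy
      rw [← hinv.2 x hxZ, hxy, hinv.2 y hyZ]
    · rw [if_pos hxZ, if_neg hyZ] at hxy
      exact absurd (hxy ▸ hinv.1 x hxZ) (hDZ y (hmemD y hy'.1 hyZ))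
    · rw [if_neg hxZ, if_pos hyZ] at hxy
      exact absurd (hxy ▸ hinv.1 y hyZ) (hDZ x (hmemD x hx'.1 hxZ))
    · rw [if_neg hxZ, if_neg hyZ] at hxy
      exact hxy


end LM2003
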